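/- Let K be a field with a topology making addition and multiplication continuous. Suppose K satisfies the polynomial implicit function theorem: for all n, m ≥ 1, every polynomial map f : K^n × K^m → K^m (each coordinate of f given by a polynomial over K in n + m variables), and every point (a,b) ∈ K^n × K^m with f(a,b) = 0 such that the m × m matrix of partial derivatives (∂fᵢ/∂yⱼ) with respect to the last m variables, evaluated at (a,b), is invertible, there exist open neighborhoods U ∋ a and V ∋ b and a continuous function g : U → V such that for (x,y) ∈ U × V one has f(x,y) = 0 if and only if y = g(x). Then K satisfies continuity of simple roots: for every d ≥ 1, every monic polynomial Q ∈ K[X] of degree d having a simple root a ∈ K (i.e. Q(a) = 0 and Q′(a) ≠ 0), and every neighborhood U of a, there is a neighborhood V ⊆ K^d (product topology) of the coefficient tuple of Q such that every monic degree-d polynomial whose coefficient tuple lies in V has a root in U. -/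
import Mathlib

/-- The monic polynomial `X^d + a_{d-1} X^{d-1} + ⋯ + a₁ X + a₀` determined by the
coefficient tuple `a ∈ K^d`. -/
noncomputable def monicOfCoeffs {K : Type*} [Field K] {d : ℕ} (a : Fin d → K) :
    Polynomial K :=
  Polynomial.X ^ d + ∑ i : Fin d, Polynomial.C (a i) * Polynomial.X ^ (i : ℕ)

noncomputable def myF {K : Type*} [Field K] (d : ℕ) : MvPolynomial (Fin d ⊕ Fin 1) K :=
  (MvPolynomial.X (Sum.inr 0)) ^ d +
    ∑ i : Fin d, MvPolynomial.X (Sum.inl i) * (MvPolynomial.X (Sum.inr 0)) ^ (i : ℕ)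

lemma evalF {K : Type*} [Field K] {d : ℕ} (x : Fin d → K) (y : Fin 1 → K) :
    MvPolynomial.eval (Sum.elim x y) (myF d) = Polynomial.eval (y 0) (monicOfCoeffs x) := by
  simp [myF, monicOfCoeffs, Polynomial.eval_finset_sum]

lemma pderivF {K : Type*} [Field K] {d : ℕ} (x : Fin d → K) (y : Fin 1 → K) :
    MvPolynomial.eval (Sum.elim x y) (MvPolynomial.pderiv (Sum.inr 0) (myF d)) =
      Polynomial.eval (y 0) (Polynomial.derivative (monicOfCoeffs x)) := by
  simp only [myF, monicOfCoeffs, map_add, map_sum, Polynomial.derivative_X_pow,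
    Polynomial.derivative_C_mul, MvPolynomial.pderiv_pow, MvPolynomial.pderiv_X_self,
    MvPolynomial.pderiv_mul, MvPolynomial.pderiv_X, Polynomial.eval_add,
    Polynomial.eval_finset_sum]
  simp

/-- If a topological field (addition and multiplication continuous) satisfies the
polynomial implicit function theorem, then it satisfies continuity of simple roots. -/
theorem stmt5 {K : Type*} [Field K] [TopologicalSpace K]
    [ContinuousAdd K] [ContinuousMul K]
    (hIFT : ∀ n m : ℕ, 1 ≤ n → 1 ≤ m →
      ∀ (F : Fin m → MvPolynomial (Fin n ⊕ Fin m) K) (a : Fin n → K) (b : Fin m → K),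
        (∀ i, MvPolynomial.eval (Sum.elim a b) (F i) = 0) →
        IsUnit (Matrix.of fun i j : Fin m =>
          MvPolynomial.eval (Sum.elim a b) (MvPolynomial.pderiv (Sum.inr j) (F i))) →
        ∃ (U : Set (Fin n → K)) (V : Set (Fin m → K)) (g : (Fin n → K) → (Fin m → K)),
          IsOpen U ∧ IsOpen V ∧ a ∈ U ∧ b ∈ V ∧ ContinuousOn g U ∧
          (∀ x ∈ U, g x ∈ V) ∧
          ∀ x ∈ U, ∀ y ∈ V,
            ((∀ i, MvPolynomial.eval (Sum.elim x y) (F i) = 0) ↔ y = g x)) :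
    ∀ d : ℕ, 1 ≤ d → ∀ q : Fin d → K, ∀ a : K,
      (monicOfCoeffs q).IsRoot a →
      Polynomial.eval a (Polynomial.derivative (monicOfCoeffs q)) ≠ 0 →
      ∀ U ∈ nhds a, ∃ V ∈ nhds q, ∀ p ∈ V, ∃ x ∈ U, (monicOfCoeffs p).IsRoot x := by
  intro d hd q a hroot hderiv U hU
  have hroot' : ∀ i : Fin 1,
      MvPolynomial.eval (Sum.elim q (fun _ => a)) ((fun _ : Fin 1 => myF d) i) = 0 := by
    intro i; rw [evalF]; exact hroot
  have hunit : IsUnit (Matrix.of fun i j : Fin 1 =>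
      MvPolynomial.eval (Sum.elim q (fun _ => a))
        (MvPolynomial.pderiv (Sum.inr j) ((fun _ : Fin 1 => myF d) i))) := by
    rw [Matrix.isUnit_iff_isUnit_det, Matrix.det_fin_one]
    have : (0 : Fin 1) = default := rfl
    simp only [Matrix.of_apply]
    rw [show ((0 : Fin 1)) = 0 from rfl]
    rw [Fin.fin_one_eq_zero (0 : Fin 1)]
    rw [pderivF]
    exact isUnit_iff_ne_zero.mpr hderiv
  obtain ⟨U', V', g, hUo, hVo, hqU, haV, hgc, hgV, hiff⟩ :=
    hIFT d 1 hd le_rfl (fun _ => myF d) q (fun _ => a) hroot' hunit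
  have hgq' : (fun _ => a) = g q := (hiff q hqU (fun _ => a) haV).mp hroot'
  have hc : ContinuousWithinAt (fun x => g x 0) U' q :=
    (continuous_apply 0).continuousAt.comp_continuousWithinAt (hgc q hqU)
  have hgq0 : g q 0 = a := by rw [← hgq']
  have hmem : (fun x => g x 0) ⁻¹' U ∈ nhdsWithin q U' :=
    hc (by show U ∈ nhds (g q 0); rw [hgq0]; exact hU)
  obtain ⟨t, hto, hqt, hts⟩ := mem_nhdsWithin.mp hmem
  refine ⟨t ∩ U', Filter.inter_mem (hto.mem_nhds hqt) (hUo.mem_nhds hqU), ?_⟩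
  · intro p hp
    refine ⟨g p 0, hts ⟨hp.1, hp.2⟩, ?_⟩
    have := (hiff p hp.2 (g p) (hgV p hp.2)).mpr rfl
    have h0 := this 0
    rw [evalF] at h0
    exact h0
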